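/- arXiv:math/0503657 — 4 statements merged into one kernel-verified Lean document; each statement's English description precedes it below -/
import Mathlib

section
/- For any probability generating function f(s) = Σ_{i≥0} s^i q(i) of a probability measure q on ℕ with finite positive mean m = f'(1), the function g(s) := 1/(1 - f(s)) - 1/(m(1-s)) satisfies 0 ≤ g(s) ≤ η for all s ∈ [0,1), where η := Σ_{y≥0} y(y-1) q(y) / m². -/
open scoped ENNReal

lemma aux0 (s : ℝ) (hs0 : 0 ≤ s) (hs1 : s ≤ 1) (n : ℕ) :
    1 - s ^ n ≤ (n : ℝ) * (1 - s) := by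
  induction n with
  | zero => simp
  | succ k ih =>
    have h1 : s ^ k ≤ 1 := pow_le_one₀ hs0 hs1
    have e : s ^ (k+1) = s ^ k * s := pow_succ s k
    push_cast
    nlinarith [mul_nonneg hs0 (sub_nonneg.2 h1)]

lemma aux2 (s : ℝ) (hs0 : 0 ≤ s) (hs1 : s ≤ 1) (n : ℕ) :
    (n : ℝ) * s ^ n * (1 - s) ≤ 1 - s ^ n := by
  induction n with
  | zero => simp
  | succ k ih =>
    have h1 : s ^ k ≤ 1 := pow_le_one₀ hs0 hs1
    have h2 : 0 ≤ s ^ k := pow_nonneg hs0 k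
    have h3 : s * ((k : ℝ) * s ^ k * (1 - s)) ≤ s * (1 - s ^ k) :=
      mul_le_mul_of_nonneg_left ih hs0
    have h5 : s ^ k * s ≤ 1 := mul_le_one₀ h1 hs0 hs1
    have h4 : (0:ℝ) ≤ (1 - s) * (1 - s ^ k * s) :=
      mul_nonneg (by linarith) (by linarith)
    push_cast
    rw [pow_succ]
    nlinarith [h3, h4]

lemma aux3 (s : ℝ) (hs0 : 0 ≤ s) (hs1 : s ≤ 1) (y z : ℕ) (h : y ≤ z) :
    (y : ℝ) * (1 - s ^ z) ≤ (z : ℝ) * (1 - s ^ y) := by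
  obtain ⟨k, rfl⟩ := Nat.exists_eq_add_of_le h
  have hsz : s ^ (y + k) = s ^ y * s ^ k := pow_add s y k
  have h1 : 1 - s ^ k ≤ (k : ℝ) * (1 - s) := aux0 s hs0 hs1 k
  have h2 : (y : ℝ) * s ^ y * (1 - s) ≤ 1 - s ^ y := aux2 s hs0 hs1 y
  have h3 : 0 ≤ s ^ y := pow_nonneg hs0 y
  have h4 : s ^ k ≤ 1 := pow_le_one₀ hs0 hs1
  have h5 : (0:ℝ) ≤ (k:ℝ) := Nat.cast_nonneg k
  have h6 : (0:ℝ) ≤ (y:ℝ) := Nat.cast_nonneg y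
  have key : (y:ℝ) * s ^ y * (1 - s ^ k) ≤ (k:ℝ) * (1 - s ^ y) := by
    calc (y:ℝ) * s ^ y * (1 - s ^ k) ≤ (y:ℝ) * s ^ y * ((k:ℝ) * (1 - s)) := by
          apply mul_le_mul_of_nonneg_left h1 (by positivity)
    _ = (k:ℝ) * ((y:ℝ) * s ^ y * (1 - s)) := by ring
    _ ≤ (k:ℝ) * (1 - s ^ y) := mul_le_mul_of_nonneg_left h2 h5
  push_cast
  nlinarith [key, hsz]

lemma aux4 (s : ℝ) (hs0 : 0 ≤ s) (hs1 : s ≤ 1) (y : ℕ) :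
    (y : ℝ) * (1 - s) - (1 - s ^ y) ≤ (1 - s) * ((y : ℝ) - 1) * (1 - s ^ y) := by
  induction y with
  | zero => simp
  | succ k ih =>
    have h1 : s ^ k ≤ 1 := pow_le_one₀ hs0 hs1
    have h2 : 0 ≤ s ^ k := pow_nonneg hs0 k
    have h3 : s ^ k * s ≤ s ^ k := by nlinarith
    have hk : (0:ℝ) ≤ (1 - s) * (k:ℝ) := mul_nonneg (by linarith) (Nat.cast_nonneg k)
    have H : (1 - s) * (k:ℝ) * (s ^ k * s) ≤ (1 - s) * (k:ℝ) * s ^ k :=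
      mul_le_mul_of_nonneg_left h3 hk
    have h6 : (0:ℝ) ≤ (1 - s) * (1 - s ^ k) := by nlinarith
    push_cast
    rw [pow_succ]
    nlinarith [H, h6, ih]

lemma aux5 (s : ℝ) (hs0 : 0 ≤ s) (hs1 : s ≤ 1) (y z : ℕ) :
    ((y:ℝ) - (z:ℝ)) * ((z:ℝ) * (1 - s ^ y) - (y:ℝ) * (1 - s ^ z)) ≤ 0 := by
  rcases le_total y z with h | h
  · have h1 : (y:ℝ) ≤ (z:ℝ) := Nat.cast_le.2 h
    have h2 := aux3 s hs0 hs1 y z h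
    nlinarith
  · have h1 : (z:ℝ) ≤ (y:ℝ) := Nat.cast_le.2 h
    have h2 := aux3 s hs0 hs1 z y h
    nlinarith

lemma auxc (y : ℕ) : (0:ℝ) ≤ (y:ℝ) * ((y:ℝ) - 1) := by
  rcases y with _ | n
  · simp
  · have : (1:ℝ) ≤ ((n+1 : ℕ) : ℝ) := by exact_mod_cast Nat.one_le_iff_ne_zero.2 (by simp)
    nlinarith [Nat.cast_nonneg (α := ℝ) (n+1)]


set_option maxHeartbeats 1000000 in
/-- For any probability generating function `f(s) = ∑ s^i q(i)` of a probability measure `q`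
on ℕ with finite positive mean `m`, the function `g(s) = 1/(1-f(s)) - 1/(m(1-s))` satisfies
`0 ≤ g(s) ≤ η` for all `s ∈ [0,1)`, where `η = ∑ y(y-1) q(y) / m²` (possibly infinite). -/
theorem stmt0 (q : ℕ → ℝ) (hq : ∀ y : ℕ, 0 ≤ q y) (hq1 : HasSum q 1)
    (m : ℝ) (hm : HasSum (fun y : ℕ => (y : ℝ) * q y) m) (hmpos : 0 < m)
    (hq1lt : q 1 < 1)
    (f : ℝ → ℝ) (hf : ∀ s, f s = ∑' i : ℕ, s ^ i * q i)
    (g : ℝ → ℝ) (hg : ∀ s, g s = 1 / (1 - f s) - 1 / (m * (1 - s)))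
    (s : ℝ) (hs0 : 0 ≤ s) (hs1 : s < 1) :
    0 ≤ g s ∧
      ENNReal.ofReal (g s) ≤
        ∑' y : ℕ, ENNReal.ofReal ((y : ℝ) * ((y : ℝ) - 1) * q y / m ^ 2) := by
  have hsle : s ≤ 1 := hs1.le
  have hqs : Summable q := hq1.summable
  have hms : Summable (fun y : ℕ => (y:ℝ) * q y) := hm.summable
  have hpow1 : ∀ y : ℕ, s ^ y ≤ 1 := fun y => pow_le_one₀ hs0 hsle
  have hpow0 : ∀ y : ℕ, 0 ≤ s ^ y := fun y => pow_nonneg hs0 y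
  have hS1 : Summable (fun y : ℕ => s ^ y * q y) := by
    apply Summable.of_nonneg_of_le
      (fun y => mul_nonneg (hpow0 y) (hq y))
      (fun y => by nlinarith [hpow1 y, hpow0 y, hq y]) hqs
  have hFhs : HasSum (fun y : ℕ => s ^ y * q y) (f s) := by
    rw [hf s]; exact hS1.hasSum
  have hDhs : HasSum (fun y : ℕ => q y * (1 - s ^ y)) (1 - f s) := by
    have h := hq1.sub hFhs
    have e : (fun y : ℕ => q y * (1 - s ^ y)) = fun y => q y - s ^ y * q y :=
      funext fun y => by ring
    rw [e]; exact h
  have hDnn : ∀ y : ℕ, 0 ≤ q y * (1 - s ^ y) :=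
    fun y => mul_nonneg (hq y) (by linarith [hpow1 y])
  -- positivity of 1 - f s
  have hy0 : ∃ y : ℕ, (y:ℝ) * q y ≠ 0 := by
    by_contra hc
    push_neg at hc
    have : HasSum (fun y : ℕ => (y:ℝ) * q y) 0 := by
      have : (fun y : ℕ => (y:ℝ) * q y) = fun _ => (0:ℝ) := funext fun y => hc y
      rw [this]; exact hasSum_zero
    have := hm.unique this
    linarith
  obtain ⟨y0, hy0⟩ := hy0
  have hy0pos : 0 < q y0 := by
    rcases (hq y0).lt_or_eq with h | h
    · exact h
    · exact absurd (by rw [← h]; ring) hy0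
  have hy0ne : y0 ≠ 0 := by
    intro h; subst h; simp at hy0
  have hsy0 : s ^ y0 < 1 := pow_lt_one₀ hs0 hs1 hy0ne
  have hDpos : 0 < 1 - f s := by
    have h1 : q y0 * (1 - s ^ y0) ≤ 1 - f s := by
      rw [← hDhs.tsum_eq]
      exact Summable.le_tsum hDhs.summable y0 (fun j _ => hDnn j)
    nlinarith
  have hEpos : 0 < m * (1 - s) := mul_pos hmpos (by linarith)
  -- 1 - f s ≤ m (1-s)
  have hEhs : HasSum (fun y : ℕ => (y:ℝ) * q y * (1 - s)) (m * (1 - s)) :=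
    hm.mul_right (1 - s)
  have hDleE : 1 - f s ≤ m * (1 - s) := by
    apply hasSum_le (fun y => ?_) hDhs hEhs
    have := aux0 s hs0 hsle y
    nlinarith [hq y]
  have hg0 : 0 ≤ g s := by
    rw [hg s]
    have h := one_div_le_one_div_of_le hDpos hDleE
    linarith
  refine ⟨hg0, ?_⟩
  by_cases htop : (∑' y : ℕ, ENNReal.ofReal ((y:ℝ) * ((y:ℝ) - 1) * q y / m ^ 2)) = ⊤
  · rw [htop]; exact le_top
  -- summable case
  have hwnn : ∀ y : ℕ, 0 ≤ (y:ℝ) * ((y:ℝ) - 1) * q y / m ^ 2 :=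
    fun y => div_nonneg (mul_nonneg (auxc y) (hq y)) (by positivity)
  have hwsum : Summable (fun y : ℕ => (y:ℝ) * ((y:ℝ) - 1) * q y / m ^ 2) := by
    have h := ENNReal.summable_toReal htop
    simpa [ENNReal.toReal_ofReal (hwnn _)] using h
  have hVsum : Summable (fun y : ℕ => (y:ℝ) * ((y:ℝ) - 1) * q y) := by
    have h := hwsum.mul_right (m ^ 2)
    have e : (fun y : ℕ => (y:ℝ) * ((y:ℝ) - 1) * q y / m ^ 2 * m ^ 2)
        = fun y : ℕ => (y:ℝ) * ((y:ℝ) - 1) * q y := by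
      funext y; field_simp
    rwa [e] at h
  set V : ℝ := ∑' y : ℕ, (y:ℝ) * ((y:ℝ) - 1) * q y with hVdef
  have hrhs : (∑' y : ℕ, ENNReal.ofReal ((y:ℝ) * ((y:ℝ) - 1) * q y / m ^ 2))
      = ENNReal.ofReal (V / m ^ 2) := by
    rw [← ENNReal.ofReal_tsum_of_nonneg hwnn hwsum, hVdef, tsum_div_const]
  rw [hrhs]
  apply ENNReal.ofReal_le_ofReal
  -- the real inequality g s ≤ V / m^2
  have hTnn : ∀ y : ℕ, 0 ≤ q y * ((y:ℝ) - 1) * (1 - s ^ y) := by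
    intro y
    rcases Nat.eq_zero_or_pos y with h | h
    · subst h; simp
    · have h1 : (1:ℝ) ≤ (y:ℝ) := by exact_mod_cast h
      have := hpow1 y
      apply mul_nonneg (mul_nonneg (hq y) (by linarith)) (by linarith)
  have hTsum : Summable (fun y : ℕ => q y * ((y:ℝ) - 1) * (1 - s ^ y)) := by
    apply Summable.of_nonneg_of_le hTnn (fun y => ?_) hms
    have h1 := hpow1 y
    have h2 := hpow0 y
    have h3 := hq y
    rcases Nat.eq_zero_or_pos y with h | h
    · subst h; simp
    · have h4 : (1:ℝ) ≤ (y:ℝ) := by exact_mod_cast h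
      have h5 : ((y:ℝ) - 1) * (1 - s ^ y) ≤ (y:ℝ) := by nlinarith
      nlinarith [mul_le_mul_of_nonneg_left h5 h3]
  set T : ℝ := ∑' y : ℕ, q y * ((y:ℝ) - 1) * (1 - s ^ y) with hTdef
  have hThs : HasSum (fun y : ℕ => q y * ((y:ℝ) - 1) * (1 - s ^ y)) T := hTsum.hasSum
  -- Step A : E - D ≤ (1-s) * T
  have hstepA : (m * (1 - s)) - (1 - f s) ≤ (1 - s) * T := by
    apply hasSum_le (fun y => ?_) (hEhs.sub hDhs) (hThs.mul_left (1 - s))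
    have h := aux4 s hs0 hsle y
    have h3 := hq y
    nlinarith
  -- Step B : m * T ≤ V * (1 - f s)
  have hstepB : m * T ≤ V * (1 - f s) := by
    have habsF : Summable (fun y : ℕ => ‖(y:ℝ) * q y‖) := by
      have e : (fun y : ℕ => ‖(y:ℝ) * q y‖) = fun y : ℕ => (y:ℝ) * q y :=
        funext fun y => by
          rw [Real.norm_eq_abs, abs_of_nonneg (mul_nonneg (Nat.cast_nonneg _) (hq _))]
      rw [e]; exact hms
    have habsG : Summable (fun y : ℕ => ‖q y * ((y:ℝ) - 1) * (1 - s ^ y)‖) := by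
      have e : (fun y : ℕ => ‖q y * ((y:ℝ) - 1) * (1 - s ^ y)‖)
          = fun y : ℕ => q y * ((y:ℝ) - 1) * (1 - s ^ y) :=
        funext fun y => by rw [Real.norm_eq_abs, abs_of_nonneg (hTnn y)]
      rw [e]; exact hTsum
    have habsV : Summable (fun y : ℕ => ‖(y:ℝ) * ((y:ℝ) - 1) * q y‖) := by
      have e : (fun y : ℕ => ‖(y:ℝ) * ((y:ℝ) - 1) * q y‖)
          = fun y : ℕ => (y:ℝ) * ((y:ℝ) - 1) * q y :=
        funext fun y => by
          rw [Real.norm_eq_abs, abs_of_nonneg (mul_nonneg (auxc y) (hq y))]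
      rw [e]; exact hVsum
    have habsD : Summable (fun y : ℕ => ‖q y * (1 - s ^ y)‖) := by
      have e : (fun y : ℕ => ‖q y * (1 - s ^ y)‖) = fun y : ℕ => q y * (1 - s ^ y) :=
        funext fun y => by rw [Real.norm_eq_abs, abs_of_nonneg (hDnn y)]
      rw [e]; exact hDhs.summable
    have hP := summable_mul_of_summable_norm habsF habsG
    have hQ := summable_mul_of_summable_norm habsV habsD
    have hmT : m * T = ∑' p : ℕ × ℕ, ((p.1:ℝ) * q p.1) * (q p.2 * ((p.2:ℝ) - 1) * (1 - s ^ p.2)) := by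
      rw [← hm.tsum_eq, hTdef]
      exact tsum_mul_tsum_of_summable_norm habsF habsG
    have hVD : V * (1 - f s) = ∑' p : ℕ × ℕ, ((p.1:ℝ) * ((p.1:ℝ) - 1) * q p.1) * (q p.2 * (1 - s ^ p.2)) := by
      rw [hVdef, ← hDhs.tsum_eq]
      exact tsum_mul_tsum_of_summable_norm habsV habsD
    rw [hmT, hVD]
    -- symmetrization
    set P : ℕ × ℕ → ℝ := fun p => ((p.1:ℝ) * q p.1) * (q p.2 * ((p.2:ℝ) - 1) * (1 - s ^ p.2)) with hPdef
    set Q : ℕ × ℕ → ℝ := fun p => ((p.1:ℝ) * ((p.1:ℝ) - 1) * q p.1) * (q p.2 * (1 - s ^ p.2)) with hQdef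
    have hPswap : Summable (fun p : ℕ × ℕ => P (Prod.swap p)) :=
      ((Equiv.prodComm ℕ ℕ).summable_iff).2 hP
    have hQswap : Summable (fun p : ℕ × ℕ => Q (Prod.swap p)) :=
      ((Equiv.prodComm ℕ ℕ).summable_iff).2 hQ
    have hPeq : ∑' p : ℕ × ℕ, P (Prod.swap p) = ∑' p, P p :=
      (Equiv.prodComm ℕ ℕ).tsum_eq P
    have hQeq : ∑' p : ℕ × ℕ, Q (Prod.swap p) = ∑' p, Q p :=
      (Equiv.prodComm ℕ ℕ).tsum_eq Q
    have hpoint : ∀ p : ℕ × ℕ, P p + P (Prod.swap p) ≤ Q p + Q (Prod.swap p) := by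
      rintro ⟨y, z⟩
      simp only [hPdef, hQdef, Prod.swap_prod_mk]
      have h5 := aux5 s hs0 hsle y z
      have hqq : 0 ≤ q y * q z := mul_nonneg (hq y) (hq z)
      nlinarith [mul_nonneg hqq (neg_nonneg.2 h5)]
    have h2le : (∑' p, P p) + (∑' p, P p) ≤ (∑' p, Q p) + (∑' p, Q p) := by
      calc (∑' p, P p) + (∑' p, P p)
          = ∑' p : ℕ × ℕ, (P p + P (Prod.swap p)) := by
            rw [Summable.tsum_add hP hPswap, hPeq]
      _ ≤ ∑' p : ℕ × ℕ, (Q p + Q (Prod.swap p)) :=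
            Summable.tsum_le_tsum hpoint (hP.add hPswap) (hQ.add hQswap)
      _ = (∑' p, Q p) + (∑' p, Q p) := by rw [Summable.tsum_add hQ hQswap, hQeq]
    linarith
  -- combine
  have hfinal : ((m * (1 - s)) - (1 - f s)) * m ^ 2 ≤ V * ((1 - f s) * (m * (1 - s))) := by
    calc ((m * (1 - s)) - (1 - f s)) * m ^ 2 ≤ ((1 - s) * T) * m ^ 2 := by nlinarith [hstepA]
    _ = (m * (1 - s)) * (m * T) := by ring
    _ ≤ (m * (1 - s)) * (V * (1 - f s)) := by nlinarith [hstepB, hEpos]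
    _ = V * ((1 - f s) * (m * (1 - s))) := by ring
  rw [hg s]
  have hid : 1 / (1 - f s) - 1 / (m * (1 - s))
      = ((m * (1 - s)) - (1 - f s)) / ((1 - f s) * (m * (1 - s))) := by
    rw [div_sub_div _ _ hDpos.ne' hEpos.ne']; ring
  rw [hid, div_le_div_iff₀ (mul_pos hDpos hEpos) (by positivity : (0:ℝ) < m ^ 2)]
  linarith [hfinal]
end

section
/- Let f_1, …, f_n be probability generating functions with finite positive means m_j = f_j'(1), and for 0 ≤ k < n define the compositions f_{k,n}(s) = f_{k+1}(f_{k+2}(⋯ f_n(s)⋯)). Set S_j = log(m_1 ⋯ m_j) (S_0 = 0). Then for 0 ≤ s < 1 and 0 ≤ k < n, the identity 1/(1 - f_{k,n}(s)) = e^{-(S_n - S_k)}/(1 - s) + Σ_{j=k}^{n-1} g_{j+1}(f_{j+1,n}(s)) e^{-(S_j - S_k)} holds, where g_j(t) := 1/(1 - f_j(t)) - 1/(f_j'(1)(1 - t)). -/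
/-- For probability generating functions `f_1, …, f_n` with finite positive means
`m_j = f_j'(1)`, the compositions `f_{k,n} = f_{k+1} ∘ ⋯ ∘ f_n` satisfy, for `0 ≤ s < 1`
and `0 ≤ k < n`, the identity
`1/(1 - f_{k,n}(s)) = e^{-(S_n - S_k)}/(1-s) + ∑_{j=k}^{n-1} g_{j+1}(f_{j+1,n}(s)) e^{-(S_j - S_k)}`,
where `S_j = log(m_1 ⋯ m_j)` and `g_j(t) = 1/(1 - f_j(t)) - 1/(m_j (1-t))`. -/
theorem stmt1 (n : ℕ) (q : ℕ → ℕ → ℝ)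
    (hq : ∀ j, ∀ y : ℕ, 0 ≤ q j y) (hq1 : ∀ j, HasSum (q j) 1)
    (m : ℕ → ℝ) (hm : ∀ j, HasSum (fun y : ℕ => (y : ℝ) * q j y) (m j))
    (hmpos : ∀ j, 0 < m j) (hq1lt : ∀ j, q j 1 < 1)
    (f : ℕ → ℝ → ℝ) (hf : ∀ j s, f j s = ∑' i : ℕ, s ^ i * q j i)
    (S : ℕ → ℝ) (hS : ∀ j, S j = Real.log (∏ i ∈ Finset.Icc 1 j, m i))
    (F : ℕ → ℝ → ℝ) (hFn : ∀ s, F n s = s)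
    (hF : ∀ k < n, ∀ s, F k s = f (k + 1) (F (k + 1) s))
    (g : ℕ → ℝ → ℝ) (hg : ∀ j t, g j t = 1 / (1 - f j t) - 1 / (m j * (1 - t)))
    (s : ℝ) (hs0 : 0 ≤ s) (hs1 : s < 1) (k : ℕ) (hk : k < n) :
    1 / (1 - F k s) = Real.exp (-(S n - S k)) / (1 - s)
      + ∑ j ∈ Finset.Ico k n, g (j + 1) (F (j + 1) s) * Real.exp (-(S j - S k)) := by

  have hSsucc : ∀ j : ℕ, S (j + 1) = S j + Real.log (m (j + 1)) := by
    intro j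
    have hpos : (0:ℝ) < ∏ i ∈ Finset.Icc 1 j, m i :=
      Finset.prod_pos fun i _ => hmpos i
    rw [hS, hS, Finset.prod_Icc_succ_top (by omega),
      Real.log_mul hpos.ne' (hmpos _).ne']
  have main : ∀ d k : ℕ, k + d + 1 = n →
      1 / (1 - F k s) = Real.exp (-(S n - S k)) / (1 - s)
        + ∑ j ∈ Finset.Ico k n, g (j + 1) (F (j + 1) s) * Real.exp (-(S j - S k)) := by
    intro d
    induction d with
    | zero =>
      intro k hkn
      have hkn' : n = k + 1 := by omega
      subst hkn'
      rw [show Finset.Ico k (k+1) = {k} by rw [Nat.Ico_succ_singleton],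
        Finset.sum_singleton, hF k (by omega), hg, hFn, hSsucc k,
        sub_self, neg_zero, Real.exp_zero, mul_one,
        show -(S k + Real.log (m (k+1)) - S k) = -Real.log (m (k+1)) by ring,
        Real.exp_neg, Real.exp_log (hmpos _)]
      simp only [one_div, mul_inv]
      ring
    | succ d ih =>
      intro k hkn
      have hkn' : k < n := by omega
      have hexp : ∀ x : ℝ,
          Real.exp (-(x - S k)) = Real.exp (-(x - S (k+1))) / m (k+1) := by
        intro x
        rw [hSsucc k, eq_div_iff (hmpos (k+1)).ne',
          ← Real.exp_log (hmpos (k+1)), ← Real.exp_add]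
        congr 1
        rw [Real.log_exp]
        ring
      have h1 : 1 / (1 - F k s)
          = g (k+1) (F (k+1) s) + (1 / m (k+1)) * (1 / (1 - F (k+1) s)) := by
        rw [hF k hkn', hg]; simp only [one_div, mul_inv]; ring
      have hIH := ih (k+1) (by omega)
      have hsum : ∑ j ∈ Finset.Ico (k+1) n,
            g (j + 1) (F (j + 1) s) * Real.exp (-(S j - S k))
          = ∑ j ∈ Finset.Ico (k+1) n,
            (1 / m (k+1)) * (g (j + 1) (F (j + 1) s)
              * Real.exp (-(S j - S (k+1)))) := by
        refine Finset.sum_congr rfl fun j _ => ?_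
        rw [hexp (S j)]; ring
      rw [Finset.sum_eq_sum_Ico_succ_bot hkn', h1, hIH, sub_self, neg_zero,
        Real.exp_zero, mul_one, hexp (S n), hsum, mul_add, Finset.mul_sum]
      ring
  exact main (n - k - 1) k (by omega)
end

section
/- (Agresti's estimate) With the notation of the composition identity, for 0 ≤ s < 1 and 0 ≤ k < n one has f_{k,n}(s) ≤ 1 - ( e^{-(S_n - S_k)}/(1 - s) + Σ_{j=k}^{n-1} η_{j+1} e^{-(S_j - S_k)} )^{-1}, where η_j = Σ_{y≥0} y(y-1) q_j(y) / m_j². -/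
open scoped ENNReal

namespace AgrestiAux

noncomputable def aa (t : ℝ) (y : ℕ) : ℝ := ∑ i ∈ Finset.range y, t ^ i
noncomputable def hh (t : ℝ) (y : ℕ) : ℝ := ∑ i ∈ Finset.range y, aa t i

variable {t : ℝ}

lemma aa_nonneg (ht0 : 0 ≤ t) (y : ℕ) : 0 ≤ aa t y :=
  Finset.sum_nonneg fun i _ => pow_nonneg ht0 i

lemma hh_nonneg (ht0 : 0 ≤ t) (y : ℕ) : 0 ≤ hh t y :=
  Finset.sum_nonneg fun i _ => aa_nonneg ht0 i

lemma aa_le_card (ht0 : 0 ≤ t) (ht1 : t ≤ 1) (y : ℕ) : aa t y ≤ y := by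
  calc aa t y ≤ ∑ _i ∈ Finset.range y, (1:ℝ) :=
        Finset.sum_le_sum fun i _ => pow_le_one₀ ht0 ht1
    _ = y := by simp

lemma one_le_aa (ht0 : 0 ≤ t) {y : ℕ} (hy : 1 ≤ y) : 1 ≤ aa t y := by
  have h0 : (0:ℕ) ∈ Finset.range y := Finset.mem_range.2 hy
  have := Finset.single_le_sum (f := fun i : ℕ => t ^ i)
    (fun i _ => pow_nonneg ht0 i) h0
  simpa [aa] using this

lemma geom_aa (y : ℕ) : (1 - t) * aa t y = 1 - t ^ y := by
  have h := geom_sum_mul t y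
  unfold aa
  linarith [h]

lemma sub_aa (y : ℕ) : (y:ℝ) - aa t y = (1 - t) * hh t y := by
  unfold hh
  rw [Finset.mul_sum]
  calc (y:ℝ) - aa t y = ∑ i ∈ Finset.range y, (1 - t ^ i) := by
        rw [Finset.sum_sub_distrib]; simp [aa]
    _ = ∑ i ∈ Finset.range y, (1 - t) * aa t i :=
        Finset.sum_congr rfl fun i _ => (geom_aa i).symm

lemma aa_mono (ht0 : 0 ≤ t) {y z : ℕ} (h : y ≤ z) : aa t y ≤ aa t z :=
  Finset.sum_le_sum_of_subset_of_nonneg (Finset.range_subset_range.2 h)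
    fun i _ _ => pow_nonneg ht0 i

lemma hh_le (ht0 : 0 ≤ t) (ht1 : t ≤ 1) (y : ℕ) : hh t y ≤ ((y:ℝ) - 1) * aa t y := by
  rcases Nat.eq_zero_or_pos y with h | h
  · simp [h, hh, aa]
  · have h0 : hh t y = ∑ i ∈ Finset.Ico 1 y, aa t i := by
      unfold hh
      rw [Finset.range_eq_Ico]
      refine (Finset.sum_subset (Finset.Ico_subset_Ico (Nat.zero_le 1) le_rfl) ?_).symm
      intro x hx hnx
      have hx0 : x = 0 := by
        simp only [Finset.mem_Ico] at hx hnx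
        omega
      simp [hx0, aa]
    rw [h0]
    calc ∑ i ∈ Finset.Ico 1 y, aa t i ≤ ∑ _i ∈ Finset.Ico 1 y, aa t y :=
          Finset.sum_le_sum fun i hi => aa_mono ht0 (le_of_lt (Finset.mem_Ico.1 hi).2)
      _ = ((y:ℝ) - 1) * aa t y := by
          rw [Finset.sum_const, Nat.card_Ico, nsmul_eq_mul, Nat.cast_sub h, Nat.cast_one]

lemma ratio (ht0 : 0 ≤ t) (ht1 : t ≤ 1) {z y : ℕ} (h : z ≤ y) :
    (z:ℝ) * aa t y ≤ (y:ℝ) * aa t z := by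
  have hsplit : aa t y = aa t z + ∑ i ∈ Finset.Ico z y, t ^ i := by
    unfold aa
    rw [Finset.range_eq_Ico,
      ← Finset.sum_Ico_consecutive _ (Nat.zero_le z) h, ← Finset.range_eq_Ico]
  have h1 : ∑ i ∈ Finset.Ico z y, t ^ i ≤ ((y:ℝ) - z) * t ^ z := by
    calc ∑ i ∈ Finset.Ico z y, t ^ i ≤ ∑ _i ∈ Finset.Ico z y, t ^ z :=
          Finset.sum_le_sum fun i hi =>
            pow_le_pow_of_le_one ht0 ht1 (Finset.mem_Ico.1 hi).1
      _ = ((y:ℝ) - z) * t ^ z := by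
          rw [Finset.sum_const, Nat.card_Ico, nsmul_eq_mul, Nat.cast_sub h]
  have h2 : (z:ℝ) * t ^ z ≤ aa t z := by
    calc (z:ℝ) * t ^ z = ∑ _i ∈ Finset.range z, t ^ z := by
          rw [Finset.sum_const, Finset.card_range, nsmul_eq_mul]
      _ ≤ aa t z := Finset.sum_le_sum fun i hi =>
          pow_le_pow_of_le_one ht0 ht1 (le_of_lt (Finset.mem_range.1 hi))
  have hz : (0:ℝ) ≤ z := Nat.cast_nonneg z
  have hyz : (z:ℝ) ≤ y := Nat.cast_le.2 h
  have ht : (0:ℝ) ≤ t ^ z := pow_nonneg ht0 z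
  rw [hsplit]
  nlinarith [mul_le_mul_of_nonneg_left h1 hz,
    mul_le_mul_of_nonneg_left h2 (by linarith : (0:ℝ) ≤ (y:ℝ) - z)]

lemma key_le (ht0 : 0 ≤ t) (ht1 : t ≤ 1) {z y : ℕ} (h : z ≤ y) :
    (y:ℝ) * hh t z + (z:ℝ) * hh t y ≤
      aa t y * ((z:ℝ) * ((z:ℝ) - 1)) + aa t z * ((y:ℝ) * ((y:ℝ) - 1)) := by
  have p1 := mul_le_mul_of_nonneg_left (hh_le ht0 ht1 z) (Nat.cast_nonneg (α := ℝ) y)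
  have p2 := mul_le_mul_of_nonneg_left (hh_le ht0 ht1 y) (Nat.cast_nonneg (α := ℝ) z)
  have p3 : (0:ℝ) ≤ ((y:ℝ) - z) * ((y:ℝ) * aa t z - (z:ℝ) * aa t y) :=
    mul_nonneg (sub_nonneg.2 (Nat.cast_le.2 h)) (sub_nonneg.2 (ratio ht0 ht1 h))
  nlinarith [p1, p2, p3]

lemma key (ht0 : 0 ≤ t) (ht1 : t ≤ 1) (y z : ℕ) :
    (y:ℝ) * hh t z + (z:ℝ) * hh t y ≤
      aa t y * ((z:ℝ) * ((z:ℝ) - 1)) + aa t z * ((y:ℝ) * ((y:ℝ) - 1)) := by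
  rcases le_total z y with h | h
  · exact key_le ht0 ht1 h
  · have := key_le ht0 ht1 h; linarith

lemma wfac_nonneg (y : ℕ) : 0 ≤ (y:ℝ) * ((y:ℝ) - 1) := by
  rcases Nat.eq_zero_or_pos y with h | h
  · simp [h]
  · have : (1:ℝ) ≤ y := by exact_mod_cast h
    nlinarith

lemma hh_le_fac (ht0 : 0 ≤ t) (ht1 : t ≤ 1) (y : ℕ) :
    hh t y ≤ (y:ℝ) * ((y:ℝ) - 1) := by
  rcases Nat.eq_zero_or_pos y with h | h
  · simp [h, hh, aa]
  · have h1 := hh_le ht0 ht1 y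
    have h2 := aa_le_card ht0 ht1 y
    have h3 : (1:ℝ) ≤ y := by exact_mod_cast h
    nlinarith [aa_nonneg ht0 y]

set_option maxHeartbeats 1000000 in
lemma onestep (q : ℕ → ℝ) (hq : ∀ y, 0 ≤ q y) (hq1 : HasSum q 1)
    (m : ℝ) (hm : HasSum (fun y : ℕ => (y:ℝ) * q y) m) (hmpos : 0 < m)
    (t : ℝ) (ht0 : 0 ≤ t) (ht1 : t < 1) :
    0 ≤ (∑' i : ℕ, t ^ i * q i) ∧ (∑' i : ℕ, t ^ i * q i) < 1 ∧
      ∀ E : ℝ, HasSum (fun y : ℕ => (y:ℝ) * ((y:ℝ) - 1) * q y) E →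
        (1 - ∑' i : ℕ, t ^ i * q i)⁻¹ ≤ (m * (1 - t))⁻¹ + E / m ^ 2 := by
  have h1t : 0 < 1 - t := by linarith
  have hsq : Summable q := hq1.summable
  have hsft : Summable (fun i : ℕ => t ^ i * q i) :=
    hsq.of_nonneg_of_le (fun i => mul_nonneg (pow_nonneg ht0 i) (hq i))
      (fun i => mul_le_of_le_one_left (hq i) (pow_le_one₀ ht0 ht1.le))
  set ft := ∑' i : ℕ, t ^ i * q i with hft_def
  have hft : HasSum (fun i : ℕ => t ^ i * q i) ft := hsft.hasSum
  have hsg : Summable (fun y : ℕ => q y * aa t y) :=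
    hm.summable.of_nonneg_of_le (fun y => mul_nonneg (hq y) (aa_nonneg ht0 y))
      (fun y => by nlinarith [aa_le_card ht0 ht1.le y, hq y, aa_nonneg ht0 y])
  set g := ∑' y : ℕ, q y * aa t y with hg_def
  have hgS : HasSum (fun y : ℕ => q y * aa t y) g := hsg.hasSum
  have hsub : HasSum (fun y : ℕ => (1 - t) * (q y * aa t y)) (1 - ft) := by
    have h2 : HasSum (fun y : ℕ => q y - t ^ y * q y) (1 - ft) := hq1.sub hft
    have heq : (fun y : ℕ => q y - t ^ y * q y)
        = fun y : ℕ => (1 - t) * (q y * aa t y) := by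
      funext y; linear_combination (-(q y)) * geom_aa (t := t) y
    rw [heq] at h2
    exact h2
  have hgeq : (1 - t) * g = 1 - ft := (hgS.mul_left (1 - t)).unique hsub
  obtain ⟨y₀, hy₀1, hy₀q⟩ : ∃ y : ℕ, 1 ≤ y ∧ 0 < q y := by
    by_contra hcon
    push_neg at hcon
    have hzero : (fun y : ℕ => (y:ℝ) * q y) = fun _ => 0 := by
      funext y
      rcases Nat.eq_zero_or_pos y with h | h
      · simp [h]
      · have hle := hcon y h
        have : q y = 0 := le_antisymm hle (hq y)
        simp [this]
    rw [hzero] at hm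
    have : (0:ℝ) = m := hasSum_zero.unique hm
    linarith
  have hgpos : 0 < g := by
    have hterm : 0 < q y₀ * aa t y₀ :=
      mul_pos hy₀q (lt_of_lt_of_le one_pos (one_le_aa ht0 hy₀1))
    exact lt_of_lt_of_le hterm
      (Summable.le_tsum hsg y₀ fun b _ => mul_nonneg (hq b) (aa_nonneg ht0 b))
  have hftlt : ft < 1 := by nlinarith
  refine ⟨tsum_nonneg fun i => mul_nonneg (pow_nonneg ht0 i) (hq i), hftlt, ?_⟩
  intro E hE
  have hwnn : ∀ y : ℕ, 0 ≤ (y:ℝ) * ((y:ℝ) - 1) * q y :=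
    fun y => mul_nonneg (wfac_nonneg y) (hq y)
  have hEnn : 0 ≤ E := hasSum_le (fun i => hwnn i) hasSum_zero hE
  have hsH : Summable (fun y : ℕ => q y * hh t y) :=
    hE.summable.of_nonneg_of_le (fun y => mul_nonneg (hq y) (hh_nonneg ht0 y))
      (fun y => by nlinarith [hh_le_fac ht0 ht1.le y, hq y, hh_nonneg ht0 y])
  set H := ∑' y : ℕ, q y * hh t y with hH_def
  have hHS : HasSum (fun y : ℕ => q y * hh t y) H := hsH.hasSum
  have hmg : (1 - t) * H = m - g := by
    have h2 : HasSum (fun y : ℕ => (y:ℝ) * q y - q y * aa t y) (m - g) := hm.sub hgS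
    have heq : (fun y : ℕ => (y:ℝ) * q y - q y * aa t y)
        = fun y : ℕ => (1 - t) * (q y * hh t y) := by
      funext y; linear_combination q y * sub_aa (t := t) y
    rw [heq] at h2
    exact (hHS.mul_left (1 - t)).unique h2
  have hAnn : ∀ y : ℕ, 0 ≤ (y:ℝ) * q y := fun y => mul_nonneg (Nat.cast_nonneg y) (hq y)
  have hBnn : ∀ y : ℕ, 0 ≤ q y * hh t y := fun y => mul_nonneg (hq y) (hh_nonneg ht0 y)
  have hCnn : ∀ y : ℕ, 0 ≤ q y * aa t y := fun y => mul_nonneg (hq y) (aa_nonneg ht0 y)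
  have S1 : HasSum (fun p : ℕ × ℕ => ((p.1:ℝ) * q p.1) * (q p.2 * hh t p.2)) (m * H) :=
    HasSum.mul (f := fun y : ℕ => (y:ℝ) * q y) (g := fun y : ℕ => q y * hh t y) hm hHS
      (Summable.mul_of_nonneg (f := fun y : ℕ => (y:ℝ) * q y) (g := fun y : ℕ => q y * hh t y) hm.summable hsH hAnn hBnn)
  have S2 : HasSum (fun p : ℕ × ℕ => (q p.1 * hh t p.1) * ((p.2:ℝ) * q p.2)) (H * m) :=
    HasSum.mul (f := fun y : ℕ => q y * hh t y) (g := fun y : ℕ => (y:ℝ) * q y) hHS hm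
      (Summable.mul_of_nonneg (f := fun y : ℕ => q y * hh t y) (g := fun y : ℕ => (y:ℝ) * q y) hsH hm.summable hBnn hAnn)
  have T1 : HasSum (fun p : ℕ × ℕ =>
      (q p.1 * aa t p.1) * ((p.2:ℝ) * ((p.2:ℝ) - 1) * q p.2)) (g * E) :=
    HasSum.mul (f := fun y : ℕ => q y * aa t y) (g := fun y : ℕ => (y:ℝ) * ((y:ℝ) - 1) * q y) hgS hE
      (Summable.mul_of_nonneg (f := fun y : ℕ => q y * aa t y) (g := fun y : ℕ => (y:ℝ) * ((y:ℝ) - 1) * q y) hsg hE.summable hCnn hwnn)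
  have T2 : HasSum (fun p : ℕ × ℕ =>
      ((p.1:ℝ) * ((p.1:ℝ) - 1) * q p.1) * (q p.2 * aa t p.2)) (E * g) :=
    HasSum.mul (f := fun y : ℕ => (y:ℝ) * ((y:ℝ) - 1) * q y) (g := fun y : ℕ => q y * aa t y) hE hgS
      (Summable.mul_of_nonneg (f := fun y : ℕ => (y:ℝ) * ((y:ℝ) - 1) * q y) (g := fun y : ℕ => q y * aa t y) hE.summable hsg hwnn hCnn)
  have hdouble : m * H + H * m ≤ g * E + E * g := by
    refine hasSum_le ?_ (S1.add S2) (T1.add T2)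
    intro p
    obtain ⟨y, z⟩ := p
    have hkey := key (t := t) ht0 ht1.le y z
    have hqq : 0 ≤ q y * q z := mul_nonneg (hq y) (hq z)
    nlinarith [mul_le_mul_of_nonneg_left hkey hqq]
  have hmH : m * H ≤ g * E := by linarith
  have key2 : m * (m - g) ≤ (1 - t) * g * E := by
    have h3 : (1 - t) * (m * H) ≤ (1 - t) * (g * E) :=
      mul_le_mul_of_nonneg_left hmH h1t.le
    calc m * (m - g) = (1 - t) * (m * H) := by rw [← hmg]; ring
      _ ≤ (1 - t) * (g * E) := h3
      _ = (1 - t) * g * E := by ring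
  rw [← hgeq]
  have hmne : m ≠ 0 := hmpos.ne'
  have hrhs : (m * (1 - t))⁻¹ + E / m ^ 2 = (m + E * (1 - t)) / (m ^ 2 * (1 - t)) := by
    field_simp
  rw [hrhs, inv_eq_one_div, div_le_div_iff₀ (by positivity) (by positivity)]
  nlinarith [mul_le_mul_of_nonneg_left key2 h1t.le, hgpos, h1t, hEnn]

end AgrestiAux

set_option maxHeartbeats 1000000 in

/-- (Agresti's estimate) For the compositions `f_{k,n}` of probability generating functions
with finite positive means, for `0 ≤ s < 1` and `0 ≤ k < n`,
`f_{k,n}(s) ≤ 1 - (e^{-(S_n-S_k)}/(1-s) + ∑_{j=k}^{n-1} η_{j+1} e^{-(S_j-S_k)})⁻¹`,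
where `η_j = ∑ y(y-1) q_j(y)/m_j²` (possibly infinite; the inequality is taken in `ℝ≥0∞`,
where it is trivial if the sum is infinite). -/
theorem stmt2 (n : ℕ) (q : ℕ → ℕ → ℝ)
    (hq : ∀ j, ∀ y : ℕ, 0 ≤ q j y) (hq1 : ∀ j, HasSum (q j) 1)
    (m : ℕ → ℝ) (hm : ∀ j, HasSum (fun y : ℕ => (y : ℝ) * q j y) (m j))
    (hmpos : ∀ j, 0 < m j) (hq1lt : ∀ j, q j 1 < 1)
    (f : ℕ → ℝ → ℝ) (hf : ∀ j s, f j s = ∑' i : ℕ, s ^ i * q j i)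
    (S : ℕ → ℝ) (hS : ∀ j, S j = Real.log (∏ i ∈ Finset.Icc 1 j, m i))
    (F : ℕ → ℝ → ℝ) (hFn : ∀ s, F n s = s)
    (hF : ∀ k < n, ∀ s, F k s = f (k + 1) (F (k + 1) s))
    (η : ℕ → ℝ≥0∞)
    (hη : ∀ j, η j = ∑' y : ℕ, ENNReal.ofReal ((y : ℝ) * ((y : ℝ) - 1) * q j y / m j ^ 2))
    (s : ℝ) (hs0 : 0 ≤ s) (hs1 : s < 1) (k : ℕ) (hk : k < n) :
    ENNReal.ofReal (F k s) ≤
      1 - (ENNReal.ofReal (Real.exp (-(S n - S k)) / (1 - s))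
        + ∑ j ∈ Finset.Ico k n, η (j + 1) * ENNReal.ofReal (Real.exp (-(S j - S k))))⁻¹ := by
  have h1s : 0 < 1 - s := by linarith
  have hfmem : ∀ j : ℕ, ∀ t : ℝ, 0 ≤ t → t < 1 → 0 ≤ f j t ∧ f j t < 1 := by
    intro j t ht0 ht1
    have h := AgrestiAux.onestep (q j) (hq j) (hq1 j) (m j) (hm j) (hmpos j) t ht0 ht1
    rw [hf j t]
    exact ⟨h.1, h.2.1⟩
  have rec1 : ∀ d i : ℕ, i + d = n → 0 ≤ F i s ∧ F i s < 1 := by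
    intro d
    induction d with
    | zero =>
      intro i hi
      have : i = n := by omega
      subst this
      rw [hFn]
      exact ⟨hs0, hs1⟩
    | succ d ih =>
      intro i hi
      have hin : i < n := by omega
      have hprev := ih (i + 1) (by omega)
      rw [hF i hin s]
      exact hfmem (i + 1) (F (i + 1) s) hprev.1 hprev.2
  by_cases htop : ∃ j ∈ Finset.Ico k n, η (j + 1) = ⊤
  · obtain ⟨j0, hj0, hj0top⟩ := htop
    have hsumtop : ∑ j ∈ Finset.Ico k n,
        η (j + 1) * ENNReal.ofReal (Real.exp (-(S j - S k))) = ⊤ := by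
      rw [ENNReal.sum_eq_top]
      refine ⟨j0, hj0, ?_⟩
      rw [hj0top]
      exact ENNReal.top_mul ((ENNReal.ofReal_pos.2 (Real.exp_pos _)).ne')
    rw [hsumtop]
    simp only [add_top, ENNReal.inv_top, tsub_zero]
    exact ENNReal.ofReal_le_one.2 (le_of_lt (rec1 (n - k) k (by omega)).2)
  · push_neg at htop
    have hwnn : ∀ J : ℕ, ∀ y : ℕ, 0 ≤ (y:ℝ) * ((y:ℝ) - 1) * q J y :=
      fun J y => mul_nonneg (AgrestiAux.wfac_nonneg y) (hq J y)
    have hfin : ∀ j ∈ Finset.Ico k n,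
        Summable (fun y : ℕ => (y:ℝ) * ((y:ℝ) - 1) * q (j+1) y) ∧
        η (j+1) = ENNReal.ofReal
          ((∑' y : ℕ, (y:ℝ) * ((y:ℝ) - 1) * q (j+1) y) / m (j+1) ^ 2) := by
      intro j hj
      have hne := htop j hj
      have hvnn : ∀ y : ℕ, 0 ≤ (y:ℝ) * ((y:ℝ) - 1) * q (j+1) y / m (j+1) ^ 2 :=
        fun y => div_nonneg (hwnn (j+1) y) (sq_nonneg _)
      rw [hη (j+1)] at hne
      have h1 : Summable (fun y : ℕ =>
          Real.toNNReal ((y:ℝ) * ((y:ℝ) - 1) * q (j+1) y / m (j+1) ^ 2)) := by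
        refine ENNReal.tsum_coe_ne_top_iff_summable.1 ?_
        convert hne using 2
        rfl
      have hsumv : Summable (fun y : ℕ =>
          (y:ℝ) * ((y:ℝ) - 1) * q (j+1) y / m (j+1) ^ 2) := by
        have h2 := NNReal.summable_coe.2 h1
        exact h2.congr fun y => Real.coe_toNNReal _ (hvnn y)
      have hm2 : (m (j+1) : ℝ) ^ 2 ≠ 0 := pow_ne_zero 2 (hmpos (j+1)).ne'
      have hsumw : Summable (fun y : ℕ => (y:ℝ) * ((y:ℝ) - 1) * q (j+1) y) := by
        have h3 := hsumv.mul_right (m (j+1) ^ 2)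
        exact h3.congr fun y => by rw [div_mul_cancel₀ _ hm2]
      refine ⟨hsumw, ?_⟩
      rw [hη (j+1), ← ENNReal.ofReal_tsum_of_nonneg hvnn hsumv]
      congr 1
      exact tsum_div_const
    set Rt : ℕ → ℝ := fun i => Real.exp (-(S n - S i)) / (1 - s)
        + ∑ j ∈ Finset.Ico i n,
          ((∑' y : ℕ, (y:ℝ) * ((y:ℝ) - 1) * q (j+1) y) / m (j+1) ^ 2)
            * Real.exp (-(S j - S i)) with hRt
    have hSrec : ∀ i : ℕ, S (i+1) = S i + Real.log (m (i+1)) := by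
      intro i
      rw [hS, hS, Finset.prod_Icc_succ_top (Nat.succ_le_succ (Nat.zero_le i)),
        Real.log_mul (ne_of_gt (Finset.prod_pos fun j _ => hmpos j)) (hmpos (i+1)).ne']
    have hexp : ∀ i j : ℕ,
        Real.exp (-(S j - S i)) = (m (i+1))⁻¹ * Real.exp (-(S j - S (i+1))) := by
      intro i j
      rw [show -(S j - S i) = -(S j - S (i+1)) + -(Real.log (m (i+1))) from by
        rw [hSrec i]; ring]
      rw [Real.exp_add, show Real.exp (-Real.log (m (i+1))) = (m (i+1))⁻¹ from by
        rw [Real.exp_neg, Real.exp_log (hmpos (i+1))]]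
      ring
    have rec2 : ∀ d i : ℕ, i + d = n → k ≤ i → (1 - F i s)⁻¹ ≤ Rt i := by
      intro d
      induction d with
      | zero =>
        intro i hi _
        have hieq : i = n := by omega
        subst hieq
        have hRn : Rt i = (1 - s)⁻¹ := by
          simp [hRt, Finset.Ico_self, one_div]
        rw [hFn s, hRn]
      | succ d ih =>
        intro i hi hki
        have hin : i < n := by omega
        have hprev := rec1 d (i + 1) (by omega)
        have hos := AgrestiAux.onestep (q (i+1)) (hq (i+1)) (hq1 (i+1)) (m (i+1))
          (hm (i+1)) (hmpos (i+1)) (F (i+1) s) hprev.1 hprev.2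
        have hsumw := (hfin i (Finset.mem_Ico.2 ⟨hki, hin⟩)).1
        have hone := hos.2.2 _ hsumw.hasSum
        have hFi : F i s = ∑' (i' : ℕ), (F (i+1) s) ^ i' * q (i+1) i' := by
          rw [hF i hin s, hf]
        rw [hFi]
        have hih := ih (i + 1) (by omega) (by omega)
        have hm1 : 0 < m (i+1) := hmpos (i+1)
        have hmono : (m (i+1) * (1 - F (i+1) s))⁻¹ ≤ (m (i+1))⁻¹ * Rt (i+1) := by
          rw [mul_inv]
          exact mul_le_mul_of_nonneg_left hih (inv_nonneg.2 hm1.le)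
        have hRtrec : Rt i = (∑' y : ℕ, (y:ℝ) * ((y:ℝ) - 1) * q (i+1) y) / m (i+1) ^ 2
            + (m (i+1))⁻¹ * Rt (i+1) := by
          simp only [hRt]
          rw [Finset.sum_eq_sum_Ico_succ_bot hin, sub_self, neg_zero, Real.exp_zero,
            mul_one]
          have hterm : ∑ j ∈ Finset.Ico (i+1) n,
              ((∑' y : ℕ, (y:ℝ) * ((y:ℝ) - 1) * q (j+1) y) / m (j+1) ^ 2)
                * Real.exp (-(S j - S i))
              = ∑ j ∈ Finset.Ico (i+1) n, (m (i+1))⁻¹ *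
                (((∑' y : ℕ, (y:ℝ) * ((y:ℝ) - 1) * q (j+1) y) / m (j+1) ^ 2)
                  * Real.exp (-(S j - S (i+1)))) :=
            Finset.sum_congr rfl fun j _ => by rw [hexp i j]; ring
          rw [hterm, ← Finset.mul_sum, hexp i n]
          ring
        rw [hRtrec]
        have := hone
        linarith [hmono]
    have hQ := rec2 (n - k) k (by omega) le_rfl
    have hPk := rec1 (n - k) k (by omega)
    have h1F : 0 < 1 - F k s := by linarith [hPk.2]
    have hRpos : 0 < Rt k := lt_of_lt_of_le (inv_pos.2 h1F) hQ
    have hRinv : (Rt k)⁻¹ ≤ 1 - F k s := by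
      have h := inv_anti₀ (inv_pos.2 h1F) hQ
      rwa [inv_inv] at h
    have hsumeq : ∑ j ∈ Finset.Ico k n,
        η (j + 1) * ENNReal.ofReal (Real.exp (-(S j - S k)))
        = ENNReal.ofReal (∑ j ∈ Finset.Ico k n,
          ((∑' y : ℕ, (y:ℝ) * ((y:ℝ) - 1) * q (j+1) y) / m (j+1) ^ 2)
            * Real.exp (-(S j - S k))) := by
      rw [ENNReal.ofReal_sum_of_nonneg (fun j _ => mul_nonneg
        (div_nonneg (tsum_nonneg fun y => hwnn (j+1) y) (sq_nonneg _))
        (Real.exp_pos _).le)]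
      refine Finset.sum_congr rfl fun j hj => ?_
      rw [(hfin j hj).2, ← ENNReal.ofReal_mul
        (div_nonneg (tsum_nonneg fun y => hwnn (j+1) y) (sq_nonneg _))]
    rw [hsumeq, ← ENNReal.ofReal_add
      (div_nonneg (Real.exp_pos _).le h1s.le)
      (Finset.sum_nonneg fun j _ => mul_nonneg
        (div_nonneg (tsum_nonneg fun y => hwnn (j+1) y) (sq_nonneg _))
        (Real.exp_pos _).le)]
    have hgoal : Real.exp (-(S n - S k)) / (1 - s)
        + ∑ j ∈ Finset.Ico k n,
          ((∑' y : ℕ, (y:ℝ) * ((y:ℝ) - 1) * q (j+1) y) / m (j+1) ^ 2)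
            * Real.exp (-(S j - S k)) = Rt k := by
      rw [hRt]
    rw [hgoal, ← ENNReal.ofReal_inv_of_pos hRpos, ← ENNReal.ofReal_one,
      ← ENNReal.ofReal_sub 1 (inv_nonneg.2 hRpos.le)]
    exact ENNReal.ofReal_le_ofReal (by linarith [hRinv])
end

section
/- Let Z be a branching process in a varying environment (q_1, q_2, …) with Z_0 = 1, means m_j ∈ (0,∞), S_n = log(m_1⋯m_n), and η_j the normalized second factorial moments. If S_n → ∞ and Σ_{j=0}^∞ η_{j+1} e^{-S_j} < ∞, then the probability of ultimate survival satisfies P(Z_n > 0 for all n) ≥ ( Σ_{j=0}^∞ η_{j+1} e^{-S_j} )^{-1} > 0. -/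
open scoped ENNReal

/-- Law of the sum of `k` i.i.d. random variables with law `q`. -/
noncomputable def iidSumPMF (q : PMF ℕ) : ℕ → PMF ℕ
  | 0 => PMF.pure 0
  | k + 1 => (iidSumPMF q k).bind fun s => q.map (s + ·)

/-- Marginal laws of the branching process in varying environment `(q_1, q_2, …)`
started at `z`. -/
noncomputable def bpve (q : ℕ → PMF ℕ) (z : ℕ) : ℕ → PMF ℕ
  | 0 => PMF.pure z
  | n + 1 => (bpve q z n).bind fun k => iidSumPMF (q (n + 1)) k

namespace Stmt17Aux

lemma tsum_pmf_bind (p : PMF ℕ) (f : ℕ → PMF ℕ) (g : ℕ → ℝ≥0∞) :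
    ∑' y, g y * (p.bind f) y = ∑' a, p a * ∑' y, g y * f a y := by
  have h : ∀ y, g y * (p.bind f) y = ∑' a, p a * (g y * f a y) := by
    intro y
    rw [PMF.bind_apply, ← ENNReal.tsum_mul_left]
    congr 1; ext a; ring
  rw [tsum_congr h, ENNReal.tsum_comm]
  congr 1; ext a
  exact ENNReal.tsum_mul_left

lemma tsum_pmf_pure (a : ℕ) (g : ℕ → ℝ≥0∞) :
    ∑' y, g y * (PMF.pure a : PMF ℕ) y = g a := by
  rw [tsum_eq_single a]
  · simp
  · intro b hb; simp [PMF.pure_apply, hb]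

lemma tsum_pmf_map_add (p : PMF ℕ) (s : ℕ) (g : ℕ → ℝ≥0∞) :
    ∑' y, g y * (p.map (s + ·)) y = ∑' x, g (s + x) * p x := by
  rw [PMF.map, tsum_pmf_bind]
  congr 1; ext x
  simp only [Function.comp_apply]
  rw [tsum_pmf_pure]
  ring

/-- first moment -/
noncomputable def M (p : PMF ℕ) : ℝ≥0∞ := ∑' (y : ℕ), (y : ℝ≥0∞) * p y

/-- second factorial moment -/
noncomputable def F (p : PMF ℕ) : ℝ≥0∞ := ∑' (y : ℕ), ((y * (y - 1) : ℕ) : ℝ≥0∞) * p y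

lemma M_bind (p : PMF ℕ) (f : ℕ → PMF ℕ) : M (p.bind f) = ∑' a, p a * M (f a) := by
  unfold M; exact tsum_pmf_bind p f _

lemma F_bind (p : PMF ℕ) (f : ℕ → PMF ℕ) : F (p.bind f) = ∑' a, p a * F (f a) := by
  unfold F; exact tsum_pmf_bind p f _

lemma M_pure (a : ℕ) : M (PMF.pure a) = a := by
  unfold M; exact tsum_pmf_pure a _

lemma F_pure (a : ℕ) : F (PMF.pure a) = ((a * (a - 1) : ℕ) : ℝ≥0∞) := by
  unfold F; exact tsum_pmf_pure a _

lemma M_map_add (q : PMF ℕ) (s : ℕ) : M (q.map (s + ·)) = s + M q := by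
  unfold M
  rw [tsum_pmf_map_add]
  have h2 : ∀ x : ℕ, ((s + x : ℕ) : ℝ≥0∞) * q x
      = (s : ℝ≥0∞) * q x + (x : ℝ≥0∞) * q x := by
    intro x; push_cast; ring
  rw [tsum_congr h2, ENNReal.tsum_add, ENNReal.tsum_mul_left, PMF.tsum_coe, mul_one]

lemma nat_fact2 (s x : ℕ) : (s + x) * (s + x - 1) = s * (s - 1) + 2 * s * x + x * (x - 1) := by
  cases s with
  | zero => simp
  | succ s =>
    cases x with
    | zero => simp
    | succ x =>
      simp only [Nat.add_sub_cancel, show s + 1 + (x + 1) - 1 = s + 1 + x from by omega]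
      ring

lemma nat_sq (y : ℕ) : y ^ 2 = y * (y - 1) + y := by
  cases y with
  | zero => simp
  | succ y => simp only [Nat.add_sub_cancel]; ring

lemma F_map_add (q : PMF ℕ) (s : ℕ) :
    F (q.map (s + ·)) = ((s * (s - 1) : ℕ) : ℝ≥0∞) + 2 * s * M q + F q := by
  unfold F M
  rw [tsum_pmf_map_add]
  have h2 : ∀ x : ℕ, (((s + x) * (s + x - 1) : ℕ) : ℝ≥0∞) * q x
      = ((s * (s - 1) : ℕ) : ℝ≥0∞) * q x + (2 * s : ℝ≥0∞) * ((x : ℝ≥0∞) * q x)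
        + ((x * (x - 1) : ℕ) : ℝ≥0∞) * q x := by
    intro x
    rw [nat_fact2]
    rw [Nat.cast_add, Nat.cast_add, Nat.cast_mul (2 * s), Nat.cast_mul 2, Nat.cast_ofNat]
    ring
  rw [tsum_congr h2, ENNReal.tsum_add, ENNReal.tsum_add, ENNReal.tsum_mul_left,
    ENNReal.tsum_mul_left, PMF.tsum_coe, mul_one]

lemma M_iidSum (q : PMF ℕ) (k : ℕ) : M (iidSumPMF q k) = k * M q := by
  induction k with
  | zero => rw [show iidSumPMF q 0 = PMF.pure 0 from rfl, M_pure]; simp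
  | succ k ih =>
    rw [show iidSumPMF q (k+1) = (iidSumPMF q k).bind fun s => q.map (s + ·) from rfl,
      M_bind, tsum_congr fun s => by rw [M_map_add]]
    have h3 : ∀ s : ℕ, iidSumPMF q k s * ((s : ℝ≥0∞) + M q)
        = (s : ℝ≥0∞) * iidSumPMF q k s + M q * iidSumPMF q k s := by
      intro s; ring
    rw [tsum_congr h3, ENNReal.tsum_add, ENNReal.tsum_mul_left, PMF.tsum_coe, mul_one,
      show (∑' (s : ℕ), (s : ℝ≥0∞) * iidSumPMF q k s) = M (iidSumPMF q k) from rfl, ih]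
    push_cast; ring

lemma F_iidSum (q : PMF ℕ) (k : ℕ) :
    F (iidSumPMF q k) = k * F q + ((k * (k - 1) : ℕ) : ℝ≥0∞) * (M q) ^ 2 := by
  induction k with
  | zero => rw [show iidSumPMF q 0 = PMF.pure 0 from rfl, F_pure]; simp
  | succ k ih =>
    rw [show iidSumPMF q (k+1) = (iidSumPMF q k).bind fun s => q.map (s + ·) from rfl,
      F_bind, tsum_congr fun s => by rw [F_map_add]]
    have h3 : ∀ s : ℕ, iidSumPMF q k s
        * (((s * (s - 1) : ℕ) : ℝ≥0∞) + 2 * s * M q + F q)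
        = ((s * (s - 1) : ℕ) : ℝ≥0∞) * iidSumPMF q k s
          + (2 * M q) * ((s : ℝ≥0∞) * iidSumPMF q k s) + F q * iidSumPMF q k s := by
      intro s; ring
    rw [tsum_congr h3, ENNReal.tsum_add, ENNReal.tsum_add, ENNReal.tsum_mul_left,
      ENNReal.tsum_mul_left, PMF.tsum_coe, mul_one,
      show (∑' (s : ℕ), (s : ℝ≥0∞) * iidSumPMF q k s) = M (iidSumPMF q k) from rfl,
      show (∑' (s : ℕ), ((s * (s - 1) : ℕ) : ℝ≥0∞) * iidSumPMF q k s)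
        = F (iidSumPMF q k) from rfl,
      ih, M_iidSum]
    have hcast : (((k + 1) * (k + 1 - 1) : ℕ) : ℝ≥0∞)
        = ((k * (k - 1) : ℕ) : ℝ≥0∞) + 2 * k := by
      have h : (k + 1) * (k + 1 - 1) = k * (k - 1) + 2 * k := by
        cases k with
        | zero => simp
        | succ k => simp only [Nat.add_sub_cancel]; ring
      rw [h, Nat.cast_add, Nat.cast_mul 2, Nat.cast_ofNat]
    rw [hcast, Nat.cast_add, Nat.cast_one]
    ring

lemma M_bpve (q : ℕ → PMF ℕ) (n : ℕ) :
    M (bpve q 1 n) = ∏ j ∈ Finset.Icc 1 n, M (q j) := by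
  induction n with
  | zero =>
    rw [show bpve q 1 0 = PMF.pure 1 from rfl, M_pure,
      Finset.Icc_eq_empty (by omega), Finset.prod_empty, Nat.cast_one]
  | succ n ih =>
    rw [show bpve q 1 (n+1) = (bpve q 1 n).bind fun k => iidSumPMF (q (n+1)) k from rfl,
      M_bind, tsum_congr fun k => by rw [M_iidSum]]
    have h3 : ∀ k : ℕ, bpve q 1 n k * ((k : ℝ≥0∞) * M (q (n+1)))
        = M (q (n+1)) * ((k : ℝ≥0∞) * bpve q 1 n k) := by intro k; ring
    rw [tsum_congr h3, ENNReal.tsum_mul_left,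
      show (∑' (k : ℕ), (k : ℝ≥0∞) * bpve q 1 n k) = M (bpve q 1 n) from rfl, ih,
      Finset.prod_Icc_succ_top (Nat.le_add_left 1 n)]
    ring

lemma F_bpve_succ (q : ℕ → PMF ℕ) (n : ℕ) :
    F (bpve q 1 (n+1))
      = M (bpve q 1 n) * F (q (n+1)) + F (bpve q 1 n) * (M (q (n+1))) ^ 2 := by
  rw [show bpve q 1 (n+1) = (bpve q 1 n).bind fun k => iidSumPMF (q (n+1)) k from rfl,
    F_bind, tsum_congr fun k => by rw [F_iidSum]]
  have h3 : ∀ k : ℕ, bpve q 1 n k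
      * ((k : ℝ≥0∞) * F (q (n+1)) + ((k * (k - 1) : ℕ) : ℝ≥0∞) * (M (q (n+1))) ^ 2)
      = F (q (n+1)) * ((k : ℝ≥0∞) * bpve q 1 n k)
        + (M (q (n+1))) ^ 2 * (((k * (k - 1) : ℕ) : ℝ≥0∞) * bpve q 1 n k) := by
    intro k; ring
  rw [tsum_congr h3, ENNReal.tsum_add, ENNReal.tsum_mul_left, ENNReal.tsum_mul_left,
    show (∑' (k : ℕ), (k : ℝ≥0∞) * bpve q 1 n k) = M (bpve q 1 n) from rfl,
    show (∑' (k : ℕ), ((k * (k - 1) : ℕ) : ℝ≥0∞) * bpve q 1 n k) = F (bpve q 1 n) from rfl]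
  ring

lemma pmf_lintegral (p : PMF ℕ) (h : ℕ → ℝ≥0∞) :
    ∫⁻ a, h a ∂p.toMeasure = ∑' a, h a * p a := by
  rw [MeasureTheory.lintegral_countable']
  congr 1; ext a
  rw [p.toMeasure_apply_singleton a (measurableSet_singleton a)]

lemma pmf_cauchy (p : PMF ℕ) (f g : ℕ → ℝ≥0∞) :
    (∑' y, f y * g y * p y) ^ 2
      ≤ (∑' (y : ℕ), (f y) ^ 2 * p y) * (∑' (y : ℕ), (g y) ^ 2 * p y) := by
  have hconj : (2 : ℝ).HolderConjugate 2 := by rw [Real.holderConjugate_iff]; norm_num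
  have H := ENNReal.lintegral_mul_le_Lp_mul_Lq p.toMeasure hconj
    (measurable_of_countable f).aemeasurable (measurable_of_countable g).aemeasurable
  simp only [Pi.mul_apply] at H
  rw [pmf_lintegral, pmf_lintegral, pmf_lintegral] at H
  have hrpow : ∀ x : ℝ≥0∞, x ^ (2 : ℝ) = x ^ (2 : ℕ) := by
    intro x
    rw [show (2 : ℝ) = ((2 : ℕ) : ℝ) from by norm_num, ENNReal.rpow_natCast]
  simp only [hrpow] at H
  set A := ∑' (y : ℕ), (f y) ^ 2 * p y
  set B := ∑' (y : ℕ), (g y) ^ 2 * p y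
  calc (∑' y, f y * g y * p y) ^ 2 ≤ (A ^ (1/2 : ℝ) * B ^ (1/2 : ℝ)) ^ 2 :=
        pow_le_pow_left₀ (zero_le) H 2
    _ = A * B := by
        rw [mul_pow, ← ENNReal.rpow_natCast (A ^ (1/2 : ℝ)), ← ENNReal.rpow_natCast
          (B ^ (1/2 : ℝ)), ← ENNReal.rpow_mul, ← ENNReal.rpow_mul]
        norm_num

lemma tsum_sq_eq (p : PMF ℕ) : (∑' (y : ℕ), ((y : ℝ≥0∞)) ^ 2 * p y) = F p + M p := by
  unfold F M
  rw [← ENNReal.tsum_add]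
  refine tsum_congr fun y => ?_
  rw [show ((y : ℝ≥0∞)) ^ 2 = ((y ^ 2 : ℕ) : ℝ≥0∞) from by push_cast; ring, nat_sq,
    Nat.cast_add]
  ring

lemma pmf_sq_mean_le (p : PMF ℕ) : (M p) ^ 2 ≤ F p + M p := by
  have H := pmf_cauchy p (fun y => (y : ℝ≥0∞)) (fun _ => 1)
  simp only [mul_one, one_pow, one_mul] at H
  rw [PMF.tsum_coe, mul_one, tsum_sq_eq] at H
  exact H

lemma pmf_survival (p : PMF ℕ) :
    (M p) ^ 2 ≤ (F p + M p) * p.toMeasure {k | 0 < k} := by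
  classical
  have H := pmf_cauchy p (fun y => (y : ℝ≥0∞)) (fun y => if 0 < y then 1 else 0)
  have h1 : (∑' (y : ℕ), (y : ℝ≥0∞) * (if 0 < y then (1:ℝ≥0∞) else 0) * p y) = M p := by
    unfold M
    refine tsum_congr fun y => ?_
    rcases Nat.eq_zero_or_pos y with hy | hy
    · simp [hy]
    · simp [hy]
  have h2 : (∑' (y : ℕ), ((if 0 < y then (1:ℝ≥0∞) else 0)) ^ 2 * p y)
      = p.toMeasure {k | 0 < k} := by
    rw [PMF.toMeasure_apply _ (by measurability)]
    refine tsum_congr fun y => ?_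
    rcases Nat.eq_zero_or_pos y with hy | hy
    · simp [hy, Set.indicator_apply]
    · simp [hy, Set.indicator_apply]
  rw [h1, h2, tsum_sq_eq] at H
  exact H

end Stmt17Aux

open Stmt17Aux Filter

/-- For a branching process in a varying environment with `Z_0 = 1`, offspring means
`m_j ∈ (0,∞)`, `S_n = log(m_1⋯m_n) → ∞` and `∑_j η_{j+1} e^{-S_j} < ∞` (where `η_j` are the
normalized second factorial moments), the probability of ultimate survival (the decreasing
limit `⨅ n, P(Z_n > 0)`) is at least `(∑_j η_{j+1} e^{-S_j})⁻¹ > 0`. -/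
theorem stmt17 (q : ℕ → PMF ℕ) (m : ℕ → ℝ) (hmpos : ∀ j, 0 < m j)
    (hmean : ∀ j, ∑' y : ℕ, (y : ℝ≥0∞) * q j y = ENNReal.ofReal (m j))
    (S : ℕ → ℝ) (hS : ∀ k, S k = ∑ j ∈ Finset.Icc 1 k, Real.log (m j))
    (η : ℕ → ℝ≥0∞)
    (hη : ∀ j, η j = ∑' y : ℕ,
      ENNReal.ofReal ((y : ℝ) * ((y : ℝ) - 1) * (q j y).toReal / m j ^ 2))
    (hStop : Filter.Tendsto S Filter.atTop Filter.atTop)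
    (hfin : ∑' j : ℕ, η (j + 1) * ENNReal.ofReal (Real.exp (-S j)) ≠ ⊤) :
    ((∑' j : ℕ, η (j + 1) * ENNReal.ofReal (Real.exp (-S j)))⁻¹ ≤
        ⨅ n, (bpve q 1 n).toMeasure {k | 0 < k}) ∧
      0 < (∑' j : ℕ, η (j + 1) * ENNReal.ofReal (Real.exp (-S j)))⁻¹ := by
  
  classical
  set a : ℕ → ℝ≥0∞ := fun j => η (j + 1) * ENNReal.ofReal (Real.exp (-S j)) with ha
  set T : ℝ≥0∞ := ∑' j : ℕ, a j with hT
  -- basic facts about means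
  have hMq : ∀ j, M (q j) = ENNReal.ofReal (m j) := fun j => hmean j
  have hMq0 : ∀ j, M (q j) ≠ 0 := fun j => by
    rw [hMq]; exact (ENNReal.ofReal_pos.2 (hmpos j)).ne'
  have hMqt : ∀ j, M (q j) ≠ ⊤ := fun j => by rw [hMq]; exact ENNReal.ofReal_ne_top
  set μ : ℕ → ℝ≥0∞ := fun n => ENNReal.ofReal (Real.exp (S n)) with hμ
  have hμ0 : ∀ n, μ n ≠ 0 := fun n => (ENNReal.ofReal_pos.2 (Real.exp_pos _)).ne'
  have hμt : ∀ n, μ n ≠ ⊤ := fun n => ENNReal.ofReal_ne_top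
  have hμinv : ∀ n, ENNReal.ofReal (Real.exp (-S n)) = (μ n)⁻¹ := by
    intro n
    rw [Real.exp_neg, ENNReal.ofReal_inv_of_pos (Real.exp_pos _)]
  have hS0 : S 0 = 0 := by rw [hS 0]; simp
  have hμ0eq : μ 0 = 1 := by
    simp only [hμ]; rw [hS0, Real.exp_zero, ENNReal.ofReal_one]
  have hSsucc : ∀ n, S (n + 1) = S n + Real.log (m (n + 1)) := by
    intro n
    rw [hS, hS, Finset.sum_Icc_succ_top (Nat.le_add_left 1 n)]
  have hμsucc : ∀ n, μ (n + 1) = μ n * M (q (n + 1)) := by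
    intro n
    rw [hMq]
    simp only [hμ]
    rw [hSsucc n, Real.exp_add, ENNReal.ofReal_mul (Real.exp_pos _).le,
      Real.exp_log (hmpos _)]
  have hμprod : ∀ n, μ n = ∏ j ∈ Finset.Icc 1 n, M (q j) := by
    intro n
    induction n with
    | zero => rw [Finset.Icc_eq_empty (by omega), Finset.prod_empty, hμ0eq]
    | succ n ih =>
      rw [hμsucc n, ih, Finset.prod_Icc_succ_top (Nat.le_add_left 1 n)]
  have hMbp : ∀ n, M (bpve q 1 n) = μ n := fun n => by rw [M_bpve, ← hμprod]
  -- η in terms of the second factorial moment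
  have hηeq : ∀ j, η j = F (q j) / (M (q j)) ^ 2 := by
    intro j
    rw [hη j]
    have hpt : ∀ y : ℕ, ENNReal.ofReal ((y : ℝ) * ((y : ℝ) - 1) * (q j y).toReal / m j ^ 2)
        = ((y * (y - 1) : ℕ) : ℝ≥0∞) * q j y * ((M (q j)) ^ 2)⁻¹ := by
      intro y
      have hyy : (y : ℝ) * ((y : ℝ) - 1) = ((y * (y - 1) : ℕ) : ℝ) := by
        cases y with
        | zero => simp
        | succ y => push_cast [Nat.add_sub_cancel]; ring
      rw [hyy, div_eq_mul_inv, ENNReal.ofReal_mul (by positivity),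
        ENNReal.ofReal_mul (by positivity), ENNReal.ofReal_inv_of_pos (pow_pos (hmpos j) 2),
        ENNReal.ofReal_natCast, ENNReal.ofReal_toReal (PMF.apply_ne_top _ _)]
      congr 1
      rw [hMq, ← ENNReal.ofReal_pow (hmpos j).le]
    rw [tsum_congr hpt, ENNReal.tsum_mul_right, div_eq_mul_inv]
    rfl
  have hηF : ∀ j, η j * (M (q j)) ^ 2 = F (q j) := fun j => by
    rw [hηeq j, ENNReal.div_mul_cancel (pow_ne_zero _ (hMq0 j))
      (ENNReal.pow_ne_top (hMqt j))]
  -- second factorial moment of the process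
  have hFbp : ∀ n, F (bpve q 1 n) = (∑ j ∈ Finset.range n, a j) * (μ n) ^ 2 := by
    intro n
    induction n with
    | zero => rw [show bpve q 1 0 = PMF.pure 1 from rfl, F_pure]; simp
    | succ n ih =>
      have key : a n * (μ n * M (q (n + 1))) ^ 2 = μ n * F (q (n + 1)) := by
        rw [← hηF (n + 1)]
        have han : a n = η (n + 1) * (μ n)⁻¹ := by simp only [ha]; rw [hμinv n]
        rw [han, mul_pow, pow_two (μ n)]
        calc η (n + 1) * (μ n)⁻¹ * (μ n * μ n * (M (q (n + 1))) ^ 2)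
            = ((μ n)⁻¹ * μ n) * (μ n * (η (n + 1) * (M (q (n + 1))) ^ 2)) := by ring
          _ = μ n * (η (n + 1) * (M (q (n + 1))) ^ 2) := by
              rw [ENNReal.inv_mul_cancel (hμ0 n) (hμt n), one_mul]
          _ = μ n * (η (n + 1) * (M (q (n + 1))) ^ 2) := rfl
      rw [F_bpve_succ, hMbp, ih, Finset.sum_range_succ, hμsucc n, add_mul, ← key]
      ring
  -- the telescoping step inequality
  have hstep : ∀ k, (μ k)⁻¹ ≤ a k + (μ (k + 1))⁻¹ := by
    intro k
    have hq := pmf_sq_mean_le (q (k + 1))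
    rw [← hηF (k + 1)] at hq
    have h := mul_le_mul_right hq ((μ k)⁻¹ * (((M (q (k + 1))) ^ 2)⁻¹))
    have hL : (μ k)⁻¹ * (((M (q (k + 1))) ^ 2)⁻¹) * (M (q (k + 1))) ^ 2 = (μ k)⁻¹ := by
      rw [mul_assoc, ENNReal.inv_mul_cancel (pow_ne_zero _ (hMq0 _))
        (ENNReal.pow_ne_top (hMqt _)), mul_one]
    have hR : (μ k)⁻¹ * (((M (q (k + 1))) ^ 2)⁻¹)
        * (η (k + 1) * (M (q (k + 1))) ^ 2 + M (q (k + 1))) = a k + (μ (k + 1))⁻¹ := by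
      rw [mul_add]
      congr 1
      · calc (μ k)⁻¹ * (((M (q (k + 1))) ^ 2)⁻¹) * (η (k + 1) * (M (q (k + 1))) ^ 2)
            = (η (k + 1) * (μ k)⁻¹) * ((((M (q (k + 1))) ^ 2)⁻¹) * (M (q (k + 1))) ^ 2) := by
              ring
          _ = η (k + 1) * (μ k)⁻¹ := by
              rw [ENNReal.inv_mul_cancel (pow_ne_zero _ (hMq0 _))
                (ENNReal.pow_ne_top (hMqt _)), mul_one]
          _ = a k := by simp only [ha]; rw [hμinv k]
      · rw [hμsucc k, ENNReal.mul_inv (Or.inl (hμ0 k)) (Or.inl (hμt k)), pow_two,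
          ENNReal.mul_inv (Or.inl (hMq0 _)) (Or.inl (hMqt _))]
        calc (μ k)⁻¹ * ((M (q (k + 1)))⁻¹ * (M (q (k + 1)))⁻¹) * M (q (k + 1))
            = ((μ k)⁻¹ * (M (q (k + 1)))⁻¹) * ((M (q (k + 1)))⁻¹ * M (q (k + 1))) := by ring
          _ = (μ k)⁻¹ * (M (q (k + 1)))⁻¹ := by
              rw [ENNReal.inv_mul_cancel (hMq0 _) (hMqt _), mul_one]
    rw [hL, hR] at h
    exact h
  -- finite telescoping
  have htail0 : ∀ n N, (μ n)⁻¹ ≤ (∑ i ∈ Finset.range N, a (n + i)) + (μ (n + N))⁻¹ := by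
    intro n N
    induction N with
    | zero => simp
    | succ N ih =>
      refine ih.trans ?_
      calc (∑ i ∈ Finset.range N, a (n + i)) + (μ (n + N))⁻¹
          ≤ (∑ i ∈ Finset.range N, a (n + i)) + (a (n + N) + (μ (n + N + 1))⁻¹) :=
            add_le_add_right (hstep (n + N)) _
        _ = (∑ i ∈ Finset.range (N + 1), a (n + i)) + (μ (n + (N + 1)))⁻¹ := by
            rw [Finset.sum_range_succ]
            exact (add_assoc _ _ _).symm
  -- tail bound
  have htail : ∀ n, (μ n)⁻¹ ≤ ∑' i, a (n + i) := by
    intro n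
    have h1 : Tendsto (fun N => ∑ i ∈ Finset.range N, a (n + i)) atTop
        (nhds (∑' i, a (n + i))) := ENNReal.tendsto_nat_tsum _
    have h2 : Tendsto (fun N : ℕ => (μ (n + N))⁻¹) atTop (nhds 0) := by
      have h3 : Tendsto (fun N : ℕ => S (n + N)) atTop atTop := by
        have h := hStop.comp (tendsto_add_atTop_nat n)
        exact h.congr fun k => by simp [Nat.add_comm]
      have h4 : Tendsto (fun N : ℕ => Real.exp (-S (n + N))) atTop (nhds 0) :=
        Real.tendsto_exp_neg_atTop_nhds_zero.comp h3
      have h5 := ENNReal.tendsto_ofReal h4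
      rw [ENNReal.ofReal_zero] at h5
      refine h5.congr fun N => ?_
      rw [hμinv]
    have h6 := h1.add h2
    rw [add_zero] at h6
    exact ge_of_tendsto' h6 fun N => htail0 n N
  -- partial sums plus e^{-S_n} bounded by T
  have hsum_le : ∀ n, (∑ j ∈ Finset.range n, a j) + (μ n)⁻¹ ≤ T := by
    intro n
    calc (∑ j ∈ Finset.range n, a j) + (μ n)⁻¹
        ≤ (∑ j ∈ Finset.range n, a j) + ∑' i, a (n + i) := add_le_add_right (htail n) _
      _ = T := by
          rw [show (∑' i, a (n + i)) = ∑' i, a (i + n) from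
            tsum_congr fun i => by rw [Nat.add_comm],
            Summable.sum_add_tsum_nat_add' ENNReal.summable]
  have h1T : (1 : ℝ≥0∞) ≤ T := by
    have h := hsum_le 0
    rw [Finset.range_zero, Finset.sum_empty, zero_add, hμ0eq, inv_one] at h
    exact h
  have hT0 : T ≠ 0 := (zero_lt_one.trans_le h1T).ne'
  -- the per-n bound
  have hmain : ∀ n, T⁻¹ ≤ (bpve q 1 n).toMeasure {k | 0 < k} := by
    intro n
    have hsurv := pmf_survival (bpve q 1 n)
    rw [hMbp n, hFbp n] at hsurv
    set ρ := ∑ j ∈ Finset.range n, a j with hρ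
    set P := (bpve q 1 n).toMeasure {k | 0 < k} with hP
    set D := ρ * (μ n) ^ 2 + μ n with hD
    have hρt : ρ ≠ ⊤ := by
      refine ne_top_of_le_ne_top hfin ?_
      exact ENNReal.sum_le_tsum _
    have hDt : D ≠ ⊤ :=
      ENNReal.add_ne_top.2 ⟨ENNReal.mul_ne_top hρt (ENNReal.pow_ne_top (hμt n)), hμt n⟩
    have hD0 : D ≠ 0 := fun h => (hμ0 n) ((add_eq_zero.mp h).2)
    have hinvsq : (μ n)⁻¹ * (μ n) ^ 2 = μ n := by
      rw [pow_two, ← mul_assoc, ENNReal.inv_mul_cancel (hμ0 n) (hμt n), one_mul]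
    have hDeq : D = (ρ + (μ n)⁻¹) * (μ n) ^ 2 := by
      rw [hD, add_mul, hinvsq]
    have hstep2 : T⁻¹ * D ≤ (μ n) ^ 2 := by
      rw [hDeq, ← mul_assoc]
      calc T⁻¹ * (ρ + (μ n)⁻¹) * (μ n) ^ 2 ≤ T⁻¹ * T * (μ n) ^ 2 :=
            mul_le_mul_left (mul_le_mul_right (hsum_le n) _) _
        _ = (μ n) ^ 2 := by rw [ENNReal.inv_mul_cancel hT0 hfin, one_mul]
    calc T⁻¹ = T⁻¹ * D * D⁻¹ := by
          rw [mul_assoc, ENNReal.mul_inv_cancel hD0 hDt, mul_one]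
      _ ≤ (μ n) ^ 2 * D⁻¹ := mul_le_mul_left hstep2 _
      _ ≤ (D * P) * D⁻¹ := mul_le_mul_left hsurv _
      _ = P * (D * D⁻¹) := by ring
      _ = P := by rw [ENNReal.mul_inv_cancel hD0 hDt, mul_one]
  exact ⟨le_iInf hmain, ENNReal.inv_pos.mpr hfin⟩
end
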